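/- Let p ≥ 5 be a prime with p ≡ 2 (mod 3). Let θ ∈ ℚ_p and q ∈ ℕ satisfy |θ−1|_p < 1, |(q:ℚ_p)|_p < 1 and (θ−1)(1−θ−q) ≠ 0. If y ∈ ℚ_p is a root of the cubic y³ − (1+θ+θ²)y² − (2θ+1)(1−θ−q)y − (1−θ−q)² = 0, then |y − 3|_p = |q(4θ+5) − (θ−1)(4θ+14) − q²|_p; in particular |y − 3|_p ≤ max{|q|_p, |θ−1|_p} < 1. -/

import Mathlib

lemma pbc_no_sqrt_neg_three (p : ℕ) [Fact (Nat.Prime p)] (hp5 : 5 ≤ p) (hp3 : p % 3 = 2)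
    (x : ZMod p) : x ^ 2 ≠ -3 := by
  intro h
  have hp : p.Prime := Fact.out
  have h2 : (2 : ZMod p) ≠ 0 := by
    intro h2
    have : ((2 : ℕ) : ZMod p) = 0 := by exact_mod_cast h2
    rw [ZMod.natCast_eq_zero_iff] at this
    have := Nat.le_of_dvd (by norm_num) this
    omega
  set ω : ZMod p := (x - 1) / 2 with hω_def
  have hω : ω ^ 2 + ω + 1 = 0 := by
    have h2inv : (2 : ZMod p) * 2⁻¹ = 1 := mul_inv_cancel₀ h2
    rw [hω_def, div_eq_mul_inv]
    linear_combination (2⁻¹ : ZMod p) ^ 2 * h + (-x * 2⁻¹ - 2⁻¹ - 1) * h2inv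
  have h3ne : (3 : ZMod p) ≠ 0 := by
    intro h3
    have : ((3 : ℕ) : ZMod p) = 0 := by exact_mod_cast h3
    rw [ZMod.natCast_eq_zero_iff] at this
    have := Nat.le_of_dvd (by norm_num) this
    omega
  have hω1 : ω ≠ 1 := by
    intro h1
    rw [h1] at hω
    exact h3ne (by linear_combination hω)
  have hω0 : ω ≠ 0 := by
    intro h0
    rw [h0] at hω
    simp at hω
  have hcube : ω ^ 3 = 1 := by linear_combination (ω - 1) * hω
  have hdvd3 : orderOf ω ∣ 3 := orderOf_dvd_of_pow_eq_one hcube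
  have hord : orderOf ω = 3 := by
    rcases (Nat.prime_three.eq_one_or_self_of_dvd _ hdvd3) with h1 | h1
    · exact absurd (orderOf_eq_one_iff.mp h1) hω1
    · exact h1
  have hfermat : ω ^ (p - 1) = 1 := ZMod.pow_card_sub_one_eq_one hω0
  have h3p : (3 : ℕ) ∣ p - 1 := hord ▸ orderOf_dvd_of_pow_eq_one hfermat
  obtain ⟨k, hk⟩ := h3p
  omega

set_option maxHeartbeats 2000000 in
/-- any root `y` of the cubic satisfies
`‖y - 3‖ = ‖q(4θ+5) - (θ-1)(4θ+14) - q²‖`, and in particular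
`‖y - 3‖ ≤ max ‖q‖ ‖θ-1‖ < 1`. -/
theorem potts_bethe_cubic_root_norm_sub_three (p : ℕ) [Fact (Nat.Prime p)]
    (hp5 : 5 ≤ p) (hp3 : p % 3 = 2) (θ : ℚ_[p]) (q : ℕ)
    (hθ : ‖θ - 1‖ < 1) (hq : ‖(q : ℚ_[p])‖ < 1)
    (hne : (θ - 1) * (1 - θ - (q : ℚ_[p])) ≠ 0)
    (y : ℚ_[p])
    (hy : y ^ 3 - (1 + θ + θ ^ 2) * y ^ 2 - (2 * θ + 1) * (1 - θ - (q : ℚ_[p])) * y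
        - (1 - θ - (q : ℚ_[p])) ^ 2 = 0) :
    ‖y - 3‖ = ‖(q : ℚ_[p]) * (4 * θ + 5) - (θ - 1) * (4 * θ + 14) - (q : ℚ_[p]) ^ 2‖ ∧
    ‖y - 3‖ ≤ max ‖(q : ℚ_[p])‖ ‖θ - 1‖ ∧ max ‖(q : ℚ_[p])‖ ‖θ - 1‖ < 1 := by
  have hp : p.Prime := Fact.out
  have ht0 : θ - 1 ≠ 0 := left_ne_zero_of_mul hne
  have ha0 : 1 - θ - (q : ℚ_[p]) ≠ 0 := right_ne_zero_of_mul hne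
  have tri : ∀ x z : ℚ_[p], ‖x + z‖ ≤ max ‖x‖ ‖z‖ := Padic.nonarchimedean
  have tri3 : ∀ x1 x2 x3 : ℚ_[p], ‖x1 - x2 - x3‖ ≤ max ‖x1‖ (max ‖x2‖ ‖x3‖) := by
    intro x1 x2 x3
    rw [show x1 - x2 - x3 = x1 + (-x2 + -x3) by ring]
    refine le_trans (tri _ _) (max_le_max le_rfl ?_)
    simpa [norm_neg] using tri (-x2) (-x3)
  have tri3' : ∀ x1 x2 x3 : ℚ_[p], ‖x1 + x2 + x3‖ ≤ max ‖x1‖ (max ‖x2‖ ‖x3‖) := by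
    intro x1 x2 x3
    rw [show x1 + x2 + x3 = x1 + (x2 + x3) by ring]
    exact le_trans (tri _ _) (max_le_max le_rfl (tri _ _))
  have hN : ∀ n : ℕ, ‖((n : ℕ) : ℚ_[p])‖ ≤ 1 := by
    intro n
    rw [show ((n : ℕ) : ℚ_[p]) = ((n : ℤ) : ℚ_[p]) by push_cast; ring]
    exact Padic.norm_int_le_one _
  have dom : ∀ c z : ℚ_[p], ‖z‖ < ‖c‖ → ‖c + z‖ = ‖c‖ := by
    intro c z h
    rw [Padic.add_eq_max_of_ne (ne_of_gt h)]
    exact max_eq_left (le_of_lt h)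
  have h3norm : ‖(3 : ℚ_[p])‖ = 1 := by
    refine le_antisymm (by simpa using hN 3) ?_
    by_contra hlt
    push_neg at hlt
    have h3 : ‖((3 : ℤ) : ℚ_[p])‖ < 1 := by norm_num at hlt ⊢; exact hlt
    rw [Padic.norm_intCast_lt_one_iff] at h3
    have := Int.le_of_dvd (by norm_num) h3
    omega
  have h9norm : ‖(9 : ℚ_[p])‖ = 1 := by
    rw [show (9 : ℚ_[p]) = 3 * 3 by norm_num, norm_mul, h3norm]
    norm_num
  have ha1 : ‖1 - θ - (q : ℚ_[p])‖ < 1 := by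
    rw [show 1 - θ - (q : ℚ_[p]) = -(θ - 1) + -(q : ℚ_[p]) by ring]
    refine lt_of_le_of_lt (tri _ _) ?_
    rw [norm_neg, norm_neg]
    exact max_lt hθ hq
  have hθ1 : ‖θ‖ ≤ 1 := by
    rw [show θ = 1 + (θ - 1) by ring]
    refine le_trans (tri _ _) (max_le (by norm_num) (le_of_lt hθ))
  have hu1 : ‖1 + θ + θ ^ 2‖ ≤ 1 := by
    refine le_trans (tri3' _ _ _) (max_le (by norm_num) (max_le hθ1 ?_))
    rw [norm_pow]
    nlinarith [norm_nonneg θ]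
  have hu2 : ‖2 * θ + 1‖ ≤ 1 := by
    refine le_trans (tri _ _) (max_le ?_ (by norm_num))
    rw [norm_mul]
    have h2 : ‖(2 : ℚ_[p])‖ ≤ 1 := by simpa using hN 2
    nlinarith [norm_nonneg θ, norm_nonneg (2 : ℚ_[p])]
  -- Step A : ‖y‖ ≤ 1
  have hyle : ‖y‖ ≤ 1 := by
    by_contra hlt
    push_neg at hlt
    have hy3 : y ^ 3 = (1 + θ + θ ^ 2) * y ^ 2 + (2 * θ + 1) * (1 - θ - (q : ℚ_[p])) * y
        + (1 - θ - (q : ℚ_[p])) ^ 2 := by linear_combination hy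
    have hb : ‖y‖ ^ 3 ≤ max (‖y‖ ^ 2) (max (‖1 - θ - (q : ℚ_[p])‖ * ‖y‖)
        (‖1 - θ - (q : ℚ_[p])‖ ^ 2)) := by
      rw [← norm_pow, hy3]
      refine le_trans (tri3' _ _ _) ?_
      refine max_le_max ?_ (max_le_max ?_ ?_)
      · rw [norm_mul, norm_pow]
        exact mul_le_of_le_one_left (by positivity) hu1
      · rw [norm_mul, norm_mul]
        exact mul_le_mul_of_nonneg_right (mul_le_of_le_one_left (norm_nonneg _) hu2)
          (norm_nonneg _)
      · rw [norm_pow]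
    have hapos := norm_nonneg (1 - θ - (q : ℚ_[p]))
    have hyp : (0:ℝ) < ‖y‖ ^ 2 := by positivity
    have hkey : ‖y‖ ^ 2 * 1 < ‖y‖ ^ 2 * ‖y‖ := by
      exact mul_lt_mul_of_pos_left hlt hyp
    rcases le_max_iff.mp hb with h | h
    · nlinarith [hkey]
    · rcases le_max_iff.mp h with h | h
      · nlinarith [hkey]
      · nlinarith [hkey]
  -- Step B : ‖y - 3‖ < 1
  have key : ‖y - 3‖ < 1 := by
    by_cases hylt : ‖y‖ < 1
    · -- small root: impossible
      exfalso
      have hy0 : y ≠ 0 := by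
        intro h0
        apply ha0
        rw [h0] at hy
        have : (1 - θ - (q : ℚ_[p])) ^ 2 = 0 := by linear_combination -hy
        exact pow_eq_zero_iff (by norm_num) |>.mp this
      have hypos : (0 : ℝ) < ‖y‖ := norm_pos_iff.mpr hy0
      have hapos : (0 : ℝ) < ‖1 - θ - (q : ℚ_[p])‖ := norm_pos_iff.mpr ha0
      have hu1' : ‖1 + θ + θ ^ 2‖ = 1 := by
        rw [show 1 + θ + θ ^ 2 = 3 + (θ - 1) * (θ + 2) by ring, dom, h3norm]
        rw [h3norm, norm_mul]
        have : ‖θ + 2‖ ≤ 1 := by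
          refine le_trans (tri _ _) (max_le hθ1 (by simpa using hN 2))
        nlinarith [norm_nonneg (θ - 1)]
      -- ‖y‖ ≤ ‖a‖
      have le1 : ‖y‖ ≤ ‖1 - θ - (q : ℚ_[p])‖ := by
        have heq2 : (1 + θ + θ ^ 2) * y ^ 2 = y ^ 3 - (2 * θ + 1) * (1 - θ - (q : ℚ_[p])) * y
            - (1 - θ - (q : ℚ_[p])) ^ 2 := by linear_combination -hy
        have hb : ‖y‖ ^ 2 ≤ max (‖y‖ ^ 3) (max (‖1 - θ - (q : ℚ_[p])‖ * ‖y‖)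
            (‖1 - θ - (q : ℚ_[p])‖ ^ 2)) := by
          have : ‖y‖ ^ 2 = ‖(1 + θ + θ ^ 2) * y ^ 2‖ := by
            rw [norm_mul, hu1', norm_pow, one_mul]
          rw [this, heq2]
          refine le_trans (tri3 _ _ _) ?_
          refine max_le_max ?_ (max_le_max ?_ ?_)
          · rw [norm_pow]
          · rw [norm_mul, norm_mul]
            exact mul_le_mul_of_nonneg_right (mul_le_of_le_one_left (norm_nonneg _) hu2)
              (norm_nonneg _)
          · rw [norm_pow]
        have hk : ‖y‖ ^ 2 * ‖y‖ < ‖y‖ ^ 2 * 1 :=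
          mul_lt_mul_of_pos_left hylt (by positivity)
        rcases le_max_iff.mp hb with h | h
        · nlinarith [hk]
        · rcases le_max_iff.mp h with h | h
          · nlinarith [hk]
          · nlinarith [hk]
      have le2 : ‖1 - θ - (q : ℚ_[p])‖ ≤ ‖y‖ := by
        have heq2 : (1 - θ - (q : ℚ_[p])) ^ 2 = y ^ 3 - (1 + θ + θ ^ 2) * y ^ 2
            - (2 * θ + 1) * (1 - θ - (q : ℚ_[p])) * y := by linear_combination -hy
        have hb : ‖1 - θ - (q : ℚ_[p])‖ ^ 2 ≤ max (‖y‖ ^ 3) (max (‖y‖ ^ 2)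
            (‖1 - θ - (q : ℚ_[p])‖ * ‖y‖)) := by
          rw [← norm_pow, heq2]
          refine le_trans (tri3 _ _ _) ?_
          refine max_le_max ?_ (max_le_max ?_ ?_)
          · rw [norm_pow]
          · rw [norm_mul, norm_pow]
            exact mul_le_of_le_one_left (by positivity) hu1
          · rw [norm_mul, norm_mul]
            exact mul_le_mul_of_nonneg_right (mul_le_of_le_one_left (norm_nonneg _) hu2)
              (norm_nonneg _)
        have hk : ‖y‖ ^ 2 * ‖y‖ ≤ ‖y‖ ^ 2 * 1 :=
          mul_le_mul_of_nonneg_left hyle (by positivity)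
        rcases le_max_iff.mp hb with h | h
        · nlinarith [hk, sq_nonneg (‖y‖ - ‖1 - θ - (q : ℚ_[p])‖), sq_nonneg (‖y‖ + ‖1 - θ - (q : ℚ_[p])‖)]
        · rcases le_max_iff.mp h with h | h
          · nlinarith [hk, sq_nonneg (‖y‖ - ‖1 - θ - (q : ℚ_[p])‖), sq_nonneg (‖y‖ + ‖1 - θ - (q : ℚ_[p])‖)]
          · nlinarith [hk]
      have hya : ‖y‖ = ‖1 - θ - (q : ℚ_[p])‖ := le_antisymm le1 le2
      -- write y = a * w
      obtain ⟨w, rfl⟩ : ∃ w, y = (1 - θ - (q : ℚ_[p])) * w :=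
        ⟨y / (1 - θ - (q : ℚ_[p])), by field_simp⟩
      have hwnorm : ‖w‖ = 1 := by
        rw [norm_mul] at hya
        have h' : ‖1 - θ - (q : ℚ_[p])‖ * ‖w‖ = ‖1 - θ - (q : ℚ_[p])‖ * 1 := by
          rw [mul_one]; exact hya
        exact mul_left_cancel₀ (ne_of_gt hapos) h'
      have heqw : (1 - θ - (q : ℚ_[p])) * w ^ 3 - (1 + θ + θ ^ 2) * w ^ 2
          - (2 * θ + 1) * w - 1 = 0 := by
        have h2 : ((1 - θ - (q : ℚ_[p])) * w ^ 3 - (1 + θ + θ ^ 2) * w ^ 2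
            - (2 * θ + 1) * w - 1) * (1 - θ - (q : ℚ_[p])) ^ 2 = 0 := by
          linear_combination hy
        rcases mul_eq_zero.mp h2 with h | h
        · exact h
        · exact absurd (pow_eq_zero_iff (by norm_num) |>.mp h) ha0
      have h331 : ‖3 * w ^ 2 + 3 * w + 1‖ < 1 := by
        have hid : 3 * w ^ 2 + 3 * w + 1 = (1 - θ - (q : ℚ_[p])) * w ^ 3
            - ((θ - 1) ^ 2 + 3 * (θ - 1)) * w ^ 2 - (2 * (θ - 1)) * w := by
          linear_combination -heqw
        rw [hid]
        refine lt_of_le_of_lt (tri3 _ _ _) (max_lt ?_ (max_lt ?_ ?_))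
        · rw [norm_mul, norm_pow, hwnorm]
          simpa using ha1
        · rw [norm_mul, norm_pow, hwnorm, one_pow, mul_one]
          rw [show (θ - 1) ^ 2 + 3 * (θ - 1) = (θ - 1) * (θ + 2) by ring, norm_mul]
          have hle : ‖θ + 2‖ ≤ 1 :=
            le_trans (tri _ _) (max_le hθ1 (by simpa using hN 2))
          calc ‖θ - 1‖ * ‖θ + 2‖ ≤ ‖θ - 1‖ * 1 :=
                mul_le_mul_of_nonneg_left hle (norm_nonneg _)
            _ < 1 := by simpa using hθ
        · rw [norm_mul, hwnorm, mul_one, norm_mul]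
          have h2 : ‖(2 : ℚ_[p])‖ ≤ 1 := by simpa using hN 2
          calc ‖(2 : ℚ_[p])‖ * ‖θ - 1‖ ≤ 1 * ‖θ - 1‖ :=
                mul_le_mul_of_nonneg_right h2 (norm_nonneg _)
            _ < 1 := by simpa using hθ
      -- u = 6w + 3
      have hule : ‖6 * w + 3‖ ≤ 1 := by
        refine le_trans (tri _ _) (max_le ?_ (by simpa using hN 3))
        rw [norm_mul, hwnorm, mul_one]
        simpa using hN 6
      have hu2lt : ‖(6 * w + 3) ^ 2 + 3‖ < 1 := by
        rw [show (6 * w + 3) ^ 2 + 3 = 12 * (3 * w ^ 2 + 3 * w + 1) by ring, norm_mul]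
        have h12 : ‖(12 : ℚ_[p])‖ ≤ 1 := by simpa using hN 12
        calc ‖(12 : ℚ_[p])‖ * ‖3 * w ^ 2 + 3 * w + 1‖ ≤ 1 * ‖3 * w ^ 2 + 3 * w + 1‖ :=
              mul_le_mul_of_nonneg_right h12 (norm_nonneg _)
          _ < 1 := by simpa using h331
      -- move to ℤ_[p] and ZMod p
      set U : ℤ_[p] := ⟨6 * w + 3, hule⟩ with hU_def
      have hUnorm : ‖U ^ 2 + 3‖ < 1 := by
        have hcoe : ((U ^ 2 + 3 : ℤ_[p]) : ℚ_[p]) = (6 * w + 3) ^ 2 + 3 := by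
          push_cast [hU_def]
          rfl
        rw [PadicInt.norm_def, hcoe]
        exact hu2lt
      have hdvd : (p : ℤ_[p]) ∣ (U ^ 2 + 3) := (PadicInt.norm_lt_one_iff_dvd _).mp hUnorm
      have hker : PadicInt.toZMod (U ^ 2 + 3) = 0 := by
        rw [← RingHom.mem_ker, PadicInt.ker_toZMod, PadicInt.maximalIdeal_eq_span_p,
          Ideal.mem_span_singleton]
        exact hdvd
      have hsq : (PadicInt.toZMod U) ^ 2 = -3 := by
        rw [map_add, map_pow, map_ofNat] at hker
        linear_combination hker
      exact pbc_no_sqrt_neg_three p hp5 hp3 _ hsq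
    · -- ‖y‖ = 1
      have hy1 : ‖y‖ = 1 := le_antisymm hyle (not_lt.mp hylt)
      have hid2 : y ^ 2 * (y - 3) = ((θ - 1) ^ 2 + 3 * (θ - 1)) * y ^ 2
          + (3 + 2 * (θ - 1)) * (1 - θ - (q : ℚ_[p])) * y
          + (1 - θ - (q : ℚ_[p])) ^ 2 := by linear_combination hy
      have : ‖y - 3‖ = ‖y ^ 2 * (y - 3)‖ := by
        rw [norm_mul, norm_pow, hy1]
        norm_num
      rw [this, hid2]
      refine lt_of_le_of_lt (tri3' _ _ _) (max_lt ?_ (max_lt ?_ ?_))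
      · rw [norm_mul, norm_pow, hy1]
        rw [show (θ - 1) ^ 2 + 3 * (θ - 1) = (θ - 1) * (θ + 2) by ring, norm_mul]
        have hle : ‖θ + 2‖ ≤ 1 := le_trans (tri _ _) (max_le hθ1 (by simpa using hN 2))
        have := mul_le_mul_of_nonneg_left hle (norm_nonneg (θ - 1))
        nlinarith
      · rw [norm_mul, norm_mul, hy1, mul_one]
        have h32 : ‖3 + 2 * (θ - 1)‖ ≤ 1 := by
          refine le_trans (tri _ _) (max_le (by simpa using hN 3) ?_)
          rw [norm_mul]
          have h2 : ‖(2 : ℚ_[p])‖ ≤ 1 := by simpa using hN 2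
          nlinarith [norm_nonneg (θ - 1), norm_nonneg (2 : ℚ_[p]), le_of_lt hθ]
        calc ‖3 + 2 * (θ - 1)‖ * ‖1 - θ - (q : ℚ_[p])‖ ≤ 1 * ‖1 - θ - (q : ℚ_[p])‖ :=
              mul_le_mul_of_nonneg_right h32 (norm_nonneg _)
          _ < 1 := by simpa using ha1
      · rw [norm_pow]
        nlinarith [norm_nonneg (1 - θ - (q : ℚ_[p]))]
  -- main identity
  have hQ3 : (y - 3) * (y ^ 2 + 3 * y + 9 - (1 + θ + θ ^ 2) * (y + 3)
      - (2 * θ + 1) * (1 - θ - (q : ℚ_[p])))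
      = -((q : ℚ_[p]) * (4 * θ + 5) - (θ - 1) * (4 * θ + 14) - (q : ℚ_[p]) ^ 2) := by
    linear_combination hy
  have hQnorm : ‖y ^ 2 + 3 * y + 9 - (1 + θ + θ ^ 2) * (y + 3)
      - (2 * θ + 1) * (1 - θ - (q : ℚ_[p]))‖ = 1 := by
    have hrw : y ^ 2 + 3 * y + 9 - (1 + θ + θ ^ 2) * (y + 3)
        - (2 * θ + 1) * (1 - θ - (q : ℚ_[p]))
        = 9 + (6 * (y - 3) + (y - 3) ^ 2 - ((θ - 1) * (θ + 2)) * (y + 3)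
          - (2 * θ + 1) * (1 - θ - (q : ℚ_[p]))) := by ring
    rw [hrw, dom, h9norm]
    rw [h9norm]
    have hy3le : ‖y + 3‖ ≤ 1 := le_trans (tri _ _) (max_le hyle (by simpa using hN 3))
    have h6 : ‖(6 : ℚ_[p])‖ ≤ 1 := by simpa using hN 6
    have hle : ‖θ + 2‖ ≤ 1 := le_trans (tri _ _) (max_le hθ1 (by simpa using hN 2))
    refine lt_of_le_of_lt (tri3 _ _ _) (max_lt (lt_of_le_of_lt (tri _ _)
      (max_lt ?_ ?_)) (max_lt ?_ ?_))
    · rw [norm_mul]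
      nlinarith [norm_nonneg (y - 3), norm_nonneg (6 : ℚ_[p])]
    · rw [norm_pow]
      nlinarith [norm_nonneg (y - 3)]
    · rw [norm_mul, norm_mul]
      have hA : ‖θ - 1‖ * ‖θ + 2‖ * ‖y + 3‖ ≤ ‖θ - 1‖ * ‖θ + 2‖ :=
        mul_le_of_le_one_right (by positivity) hy3le
      have hB : ‖θ - 1‖ * ‖θ + 2‖ ≤ ‖θ - 1‖ :=
        mul_le_of_le_one_right (norm_nonneg _) hle
      exact lt_of_le_of_lt (le_trans hA hB) hθ
    · rw [norm_mul]
      nlinarith [norm_nonneg (1 - θ - (q : ℚ_[p])), norm_nonneg (2 * θ + 1)]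
  have hmain : ‖y - 3‖ = ‖(q : ℚ_[p]) * (4 * θ + 5) - (θ - 1) * (4 * θ + 14)
      - (q : ℚ_[p]) ^ 2‖ := by
    have := congrArg norm hQ3
    rw [norm_mul, hQnorm, mul_one, norm_neg] at this
    exact this
  have hEle : ‖(q : ℚ_[p]) * (4 * θ + 5) - (θ - 1) * (4 * θ + 14) - (q : ℚ_[p]) ^ 2‖
      ≤ max ‖(q : ℚ_[p])‖ ‖θ - 1‖ := by
    have hc45 : ‖4 * θ + 5‖ ≤ 1 := by
      refine le_trans (tri _ _) (max_le ?_ (by simpa using hN 5))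
      rw [norm_mul]
      have h4 : ‖(4 : ℚ_[p])‖ ≤ 1 := by simpa using hN 4
      nlinarith [norm_nonneg θ, norm_nonneg (4 : ℚ_[p])]
    have hc414 : ‖4 * θ + 14‖ ≤ 1 := by
      refine le_trans (tri _ _) (max_le ?_ (by simpa using hN 14))
      rw [norm_mul]
      have h4 : ‖(4 : ℚ_[p])‖ ≤ 1 := by simpa using hN 4
      nlinarith [norm_nonneg θ, norm_nonneg (4 : ℚ_[p])]
    refine le_trans (tri3 _ _ _) (max_le ?_ (max_le ?_ ?_))
    · rw [norm_mul]
      refine le_trans ?_ (le_max_left _ _)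
      nlinarith [norm_nonneg (q : ℚ_[p]), norm_nonneg (4 * θ + 5)]
    · rw [norm_mul]
      refine le_trans ?_ (le_max_right _ _)
      nlinarith [norm_nonneg (θ - 1), norm_nonneg (4 * θ + 14)]
    · rw [norm_pow]
      refine le_trans ?_ (le_max_left _ _)
      nlinarith [norm_nonneg (q : ℚ_[p]), le_of_lt hq]
  exact ⟨hmain, hmain ▸ hEle, max_lt hq hθ⟩
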